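/- arXiv:2309.02046 — 2 statements merged into one kernel-verified Lean document; each statement's English description precedes it below -/
import Mathlib

section
/- Let A ∈ ℝᵐˣⁿ and suppose (1/√m)A satisfies the restricted isometry property of order s+s' with constant δ_{s+s'} ∈ (0,1). Then for any disjoint subsets S, T ⊆ [n] with |S| ≤ s and |T| ≤ s', one has ‖(1/m) A_Sᵀ A_T‖ ≤ δ_{s+s'}, where ‖·‖ is the spectral norm. -/
open Finset

/-- If `(1/√m)A` satisfies the RIP of order `s+s'` with constant `δ ∈ (0,1)`, then for any
disjoint `S, T ⊆ [n]` with `|S| ≤ s`, `|T| ≤ s'`, the spectral norm bound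
`‖(1/m) A_Sᵀ A_T‖ ≤ δ` holds, stated in the equivalent bilinear form
`|(1/m) ⟨Au, Av⟩| ≤ δ ‖u‖ ‖v‖` for all `u` supported in `S` and `v` supported in `T`. -/
theorem stmt_6 {m n : ℕ} (A : Matrix (Fin m) (Fin n) ℝ) (s s' : ℕ) (δ : ℝ)
    (hδ : 0 < δ ∧ δ < 1)
    (hRIP : ∀ x : Fin n → ℝ, {i | x i ≠ 0}.ncard ≤ s + s' →
      (1 - δ) * (∑ j, x j ^ 2) ≤ (1 / (m : ℝ)) * ∑ i, (A.mulVec x i) ^ 2 ∧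
      (1 / (m : ℝ)) * ∑ i, (A.mulVec x i) ^ 2 ≤ (1 + δ) * (∑ j, x j ^ 2))
    (S T : Finset (Fin n)) (hST : Disjoint S T) (hS : S.card ≤ s) (hT : T.card ≤ s') :
    ∀ u v : Fin n → ℝ, (∀ i, u i ≠ 0 → i ∈ S) → (∀ i, v i ≠ 0 → i ∈ T) →
      |(1 / (m : ℝ)) * ∑ i, A.mulVec u i * A.mulVec v i|
        ≤ δ * Real.sqrt (∑ j, u j ^ 2) * Real.sqrt (∑ j, v j ^ 2) := by
  intro u v hu hv
  set a := Real.sqrt (∑ j, u j ^ 2) with ha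
  set b := Real.sqrt (∑ j, v j ^ 2) with hb
  have hsumU : (0:ℝ) ≤ ∑ j, u j ^ 2 := Finset.sum_nonneg (fun j _ => sq_nonneg _)
  have hsumV : (0:ℝ) ≤ ∑ j, v j ^ 2 := Finset.sum_nonneg (fun j _ => sq_nonneg _)
  have ha2 : a ^ 2 = ∑ j, u j ^ 2 := Real.sq_sqrt hsumU
  have hb2 : b ^ 2 = ∑ j, v j ^ 2 := Real.sq_sqrt hsumV
  -- degenerate cases
  by_cases hau : ∑ j, u j ^ 2 = 0
  · have hu0 : ∀ j, u j = 0 := by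
      intro j
      have := (Finset.sum_eq_zero_iff_of_nonneg (fun j _ => sq_nonneg (u j))).mp hau j (Finset.mem_univ j)
      exact pow_eq_zero_iff (n := 2) (by norm_num) |>.mp this
    have : ∀ i, A.mulVec u i = 0 := by
      intro i; simp [Matrix.mulVec, dotProduct, hu0]
    simp [this, ha, hau]
  by_cases hav : ∑ j, v j ^ 2 = 0
  · have hv0 : ∀ j, v j = 0 := by
      intro j
      have := (Finset.sum_eq_zero_iff_of_nonneg (fun j _ => sq_nonneg (v j))).mp hav j (Finset.mem_univ j)
      exact pow_eq_zero_iff (n := 2) (by norm_num) |>.mp this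
    have : ∀ i, A.mulVec v i = 0 := by
      intro i; simp [Matrix.mulVec, dotProduct, hv0]
    simp [this, hb, hav]
  have hapos : 0 < a := Real.sqrt_pos.mpr (lt_of_le_of_ne hsumU (Ne.symm hau))
  have hbpos : 0 < b := Real.sqrt_pos.mpr (lt_of_le_of_ne hsumV (Ne.symm hav))
  -- disjoint supports ⇒ pointwise products vanish
  have huv : ∀ j, u j * v j = 0 := by
    intro j
    by_cases h1 : u j = 0
    · simp [h1]
    by_cases h2 : v j = 0
    · simp [h2]
    exact absurd (hST.forall_ne_finset (hu j h1) (hv j h2)) (by simp)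
  -- support bound for combinations
  have hsupp : ∀ (c d : ℝ), {i | c * u i + d * v i ≠ 0}.ncard ≤ s + s' := by
    intro c d
    have hsub : {i | c * u i + d * v i ≠ 0} ⊆ ↑(S ∪ T) := by
      intro i hi
      simp only [Set.mem_setOf_eq] at hi
      by_cases h1 : u i = 0
      · by_cases h2 : v i = 0
        · exact absurd (by simp [h1, h2]) hi
        · exact Finset.mem_coe.mpr (Finset.mem_union_right _ (hv i h2))
      · exact Finset.mem_coe.mpr (Finset.mem_union_left _ (hu i h1))
    calc {i | c * u i + d * v i ≠ 0}.ncard ≤ (↑(S ∪ T) : Set (Fin n)).ncard :=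
          Set.ncard_le_ncard hsub (Set.toFinite _)
      _ = (S ∪ T).card := by rw [Set.ncard_coe_finset]
      _ ≤ S.card + T.card := Finset.card_union_le _ _
      _ ≤ s + s' := Nat.add_le_add hS hT
  set w1 : Fin n → ℝ := fun j => b * u j + a * v j with hw1
  set w2 : Fin n → ℝ := fun j => b * u j + (-a) * v j with hw2
  have h1 := hRIP w1 (hsupp b a)
  have h2 := hRIP w2 (hsupp b (-a))
  -- norms of w1, w2
  have hn1 : ∑ j, w1 j ^ 2 = 2 * (a^2 * b^2) := by
    have : ∀ j, w1 j ^ 2 = b^2 * u j ^2 + a^2 * v j ^2 + 2*a*b*(u j * v j) := by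
      intro j; simp [hw1]; ring
    simp only [this, huv]
    rw [Finset.sum_add_distrib, Finset.sum_add_distrib, ← Finset.mul_sum, ← Finset.mul_sum]
    simp [ha2, hb2]; ring
  have hn2 : ∑ j, w2 j ^ 2 = 2 * (a^2 * b^2) := by
    have : ∀ j, w2 j ^ 2 = b^2 * u j ^2 + a^2 * v j ^2 - 2*a*b*(u j * v j) := by
      intro j; simp [hw2]; ring
    simp only [this, huv]
    rw [Finset.sum_sub_distrib, Finset.sum_add_distrib, ← Finset.mul_sum, ← Finset.mul_sum]
    simp [ha2, hb2]; ring
  -- mulVec expansions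
  have hm1 : ∀ i, A.mulVec w1 i = b * A.mulVec u i + a * A.mulVec v i := by
    intro i
    simp only [Matrix.mulVec, dotProduct, hw1]
    rw [Finset.mul_sum, Finset.mul_sum, ← Finset.sum_add_distrib]
    exact Finset.sum_congr rfl (fun j _ => by ring)
  have hm2 : ∀ i, A.mulVec w2 i = b * A.mulVec u i - a * A.mulVec v i := by
    intro i
    simp only [Matrix.mulVec, dotProduct, hw2]
    rw [Finset.mul_sum, Finset.mul_sum, ← Finset.sum_sub_distrib]
    exact Finset.sum_congr rfl (fun j _ => by ring)
  -- key identity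
  have hkey : (∑ i, (A.mulVec w1 i)^2) - (∑ i, (A.mulVec w2 i)^2)
      = 4 * a * b * ∑ i, A.mulVec u i * A.mulVec v i := by
    simp only [hm1, hm2]
    rw [← Finset.sum_sub_distrib, Finset.mul_sum]
    exact Finset.sum_congr rfl (fun i _ => by ring)
  rw [hn1] at h1
  rw [hn2] at h2
  obtain ⟨h1l, h1u⟩ := h1
  obtain ⟨h2l, h2u⟩ := h2
  rw [abs_le]
  have hm : (0:ℝ) ≤ 1 / (m:ℝ) := by positivity
  constructor
  · nlinarith [mul_pos hapos hbpos, mul_le_mul_of_nonneg_left (sub_le_sub h2u h1l) hm,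
      mul_le_mul_of_nonneg_left (sub_le_sub h1u h2l) hm]
  · nlinarith [mul_pos hapos hbpos, mul_le_mul_of_nonneg_left (sub_le_sub h2u h1l) hm,
      mul_le_mul_of_nonneg_left (sub_le_sub h1u h2l) hm]
end

section
/- Let M ∈ ℝⁿˣⁿ be symmetric with all eigenvalues in the interval [α, β] where 0 < α ≤ β. Let S, T ⊆ [n] be disjoint index sets. Then the spectral norm of the off-diagonal block satisfies ‖M_{S,T}‖ ≤ max{β − c, c − α} for every real c; in particular, taking c = (α+β)/2 gives ‖M_{S,T}‖ ≤ (β − α)/2. -/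
open Finset Matrix

/-- Off-diagonal block bound: if symmetric `M` has all eigenvalues in `[α, β]`
(encoded by `α‖v‖² ≤ vᵀMv ≤ β‖v‖²`), and `S, T` are disjoint index sets, then for every
`c`, `‖M_{S,T}‖ ≤ max{β − c, c − α}` (spectral norm, stated in bilinear form over vectors
supported in `S` resp. `T`); in particular with `c = (α+β)/2`, `‖M_{S,T}‖ ≤ (β−α)/2`. -/
theorem stmt_16 {n : ℕ} (M : Matrix (Fin n) (Fin n) ℝ) (hM : M.IsSymm)
    (α β : ℝ) (hαβ : 0 < α ∧ α ≤ β)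
    (hquad : ∀ v : Fin n → ℝ,
      α * (∑ i, v i ^ 2) ≤ v ⬝ᵥ M.mulVec v ∧ v ⬝ᵥ M.mulVec v ≤ β * (∑ i, v i ^ 2))
    (S T : Finset (Fin n)) (hST : Disjoint S T) :
    (∀ c : ℝ, ∀ u v : Fin n → ℝ, (∀ i, u i ≠ 0 → i ∈ S) → (∀ i, v i ≠ 0 → i ∈ T) →
      |u ⬝ᵥ M.mulVec v| ≤ max (β - c) (c - α) *
        Real.sqrt (∑ i, u i ^ 2) * Real.sqrt (∑ i, v i ^ 2)) ∧
    (∀ u v : Fin n → ℝ, (∀ i, u i ≠ 0 → i ∈ S) → (∀ i, v i ≠ 0 → i ∈ T) →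
      |u ⬝ᵥ M.mulVec v| ≤ (β - α) / 2 *
        Real.sqrt (∑ i, u i ^ 2) * Real.sqrt (∑ i, v i ^ 2)) := by
  obtain ⟨hα, hαβ'⟩ := hαβ
  have hsymm : ∀ x y : Fin n → ℝ, x ⬝ᵥ M.mulVec y = y ⬝ᵥ M.mulVec x := by
    intro x y
    calc x ⬝ᵥ M.mulVec y = M.vecMul x ⬝ᵥ y := dotProduct_mulVec _ _ _
      _ = Mᵀ.vecMul x ⬝ᵥ y := by rw [hM.eq]
      _ = M.mulVec x ⬝ᵥ y := by rw [Matrix.vecMul_transpose]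
      _ = y ⬝ᵥ M.mulVec x := dotProduct_comm _ _
  have hKey : ∀ c : ℝ, ∀ u v : Fin n → ℝ, (∀ i, u i ≠ 0 → i ∈ S) → (∀ i, v i ≠ 0 → i ∈ T) →
      |u ⬝ᵥ M.mulVec v| ≤ max (β - c) (c - α) *
        Real.sqrt (∑ i, u i ^ 2) * Real.sqrt (∑ i, v i ^ 2) := by
    intro c u v hu hv
    set K := max (β - c) (c - α) with hK
    have hK0 : 0 ≤ K := by
      rcases le_total 0 (β - c) with h | h
      · exact le_trans h (le_max_left _ _)
      · exact le_trans (by linarith) (le_max_right _ _)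
    have hquad' : ∀ w : Fin n → ℝ,
        |w ⬝ᵥ M.mulVec w - c * ∑ i, w i ^ 2| ≤ K * ∑ i, w i ^ 2 := by
      intro w
      have hq := hquad w
      have hs : (0:ℝ) ≤ ∑ i, w i ^ 2 := Finset.sum_nonneg fun i _ => sq_nonneg _
      have h1 : (c - α) * ∑ i, w i ^ 2 ≤ K * ∑ i, w i ^ 2 :=
        mul_le_mul_of_nonneg_right (le_max_right _ _) hs
      have h2 : (β - c) * ∑ i, w i ^ 2 ≤ K * ∑ i, w i ^ 2 :=
        mul_le_mul_of_nonneg_right (le_max_left _ _) hs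
      rw [abs_le]
      constructor
      · nlinarith [hq.1]
      · nlinarith [hq.2]
    have horth : ∑ i, u i * v i = 0 := by
      apply Finset.sum_eq_zero
      intro i _
      by_cases h : u i = 0
      · simp [h]
      · by_cases h' : v i = 0
        · simp [h']
        · exact absurd (hv i h') (Finset.disjoint_left.mp hST (hu i h))
    -- core polarization bound for orthogonally supported vectors
    have hcore : ∀ x y : Fin n → ℝ, (∑ i, x i * y i = 0) →
        |x ⬝ᵥ M.mulVec y| * 2 ≤ K * ((∑ i, x i ^ 2) + (∑ i, y i ^ 2)) := by
      intro x y hxy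
      have e1 : (x + y) ⬝ᵥ M.mulVec (x + y) =
          x ⬝ᵥ M.mulVec x + 2 * (x ⬝ᵥ M.mulVec y) + y ⬝ᵥ M.mulVec y := by
        rw [Matrix.mulVec_add, dotProduct_add, add_dotProduct, add_dotProduct, hsymm y x]
        ring
      have e2 : (x - y) ⬝ᵥ M.mulVec (x - y) =
          x ⬝ᵥ M.mulVec x - 2 * (x ⬝ᵥ M.mulVec y) + y ⬝ᵥ M.mulVec y := by
        rw [Matrix.mulVec_sub, dotProduct_sub, sub_dotProduct, sub_dotProduct, hsymm y x]
        ring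
      have q1 : ∑ i, (x + y) i ^ 2 = (∑ i, x i ^ 2) + (∑ i, y i ^ 2) := by
        have h : ∑ i, (x + y) i ^ 2
            = ∑ i, (x i ^ 2 + 2 * (x i * y i) + y i ^ 2) := by
          refine Finset.sum_congr rfl fun i _ => ?_
          simp only [Pi.add_apply]; ring
        rw [h, Finset.sum_add_distrib, Finset.sum_add_distrib, ← Finset.mul_sum, hxy]
        ring
      have q2 : ∑ i, (x - y) i ^ 2 = (∑ i, x i ^ 2) + (∑ i, y i ^ 2) := by
        have h : ∑ i, (x - y) i ^ 2
            = ∑ i, (x i ^ 2 + 2 * (x i * y i) + y i ^ 2 - 4 * (x i * y i)) := by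
          refine Finset.sum_congr rfl fun i _ => ?_
          simp only [Pi.sub_apply]; ring
        rw [h, Finset.sum_sub_distrib, Finset.sum_add_distrib, Finset.sum_add_distrib,
          ← Finset.mul_sum, ← Finset.mul_sum, hxy]
        ring
      have hp := hquad' (x + y)
      have hm := hquad' (x - y)
      rw [e1, q1, abs_le] at hp
      rw [e2, q2, abs_le] at hm
      rcases abs_cases (x ⬝ᵥ M.mulVec y) with ⟨h, _⟩ | ⟨h, _⟩ <;> rw [h] <;>
        [linarith [hp.2, hm.1]; linarith [hp.1, hm.2]]
    set A := ∑ i, u i ^ 2 with hA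
    set Bq := ∑ i, v i ^ 2 with hBq
    have hA0 : 0 ≤ A := Finset.sum_nonneg fun i _ => sq_nonneg _
    have hB0 : 0 ≤ Bq := Finset.sum_nonneg fun i _ => sq_nonneg _
    by_cases hAz : A = 0
    · have hu0 : u = 0 := by
        funext i
        have h := (Finset.sum_eq_zero_iff_of_nonneg (fun i _ => sq_nonneg (u i))).mp hAz i
          (Finset.mem_univ i)
        exact pow_eq_zero_iff (two_ne_zero) |>.mp h
      rw [hu0]
      simp only [zero_dotProduct, abs_zero]
      exact mul_nonneg (mul_nonneg hK0 (Real.sqrt_nonneg _)) (Real.sqrt_nonneg _)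
    by_cases hBz : Bq = 0
    · have hv0 : v = 0 := by
        funext i
        have h := (Finset.sum_eq_zero_iff_of_nonneg (fun i _ => sq_nonneg (v i))).mp hBz i
          (Finset.mem_univ i)
        exact pow_eq_zero_iff (two_ne_zero) |>.mp h
      rw [hv0]
      simp only [Matrix.mulVec_zero, dotProduct_zero, abs_zero]
      exact mul_nonneg (mul_nonneg hK0 (Real.sqrt_nonneg _)) (Real.sqrt_nonneg _)
    have hApos : 0 < A := lt_of_le_of_ne hA0 (Ne.symm hAz)
    have hBpos : 0 < Bq := lt_of_le_of_ne hB0 (Ne.symm hBz)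
    set a := Real.sqrt A with ha
    set b := Real.sqrt Bq with hb
    have hapos : 0 < a := Real.sqrt_pos.mpr hApos
    have hbpos : 0 < b := Real.sqrt_pos.mpr hBpos
    have haa : a * a = A := Real.mul_self_sqrt hA0
    have hbb : b * b = Bq := Real.mul_self_sqrt hB0
    set t := Real.sqrt (b / a) with ht
    have htpos : 0 < t := Real.sqrt_pos.mpr (div_pos hbpos hapos)
    have htt : t * t = b / a := Real.mul_self_sqrt (le_of_lt (div_pos hbpos hapos))
    have hortht : ∑ i, (t • u) i * (t⁻¹ • v) i = 0 := by
      have h : ∀ i, (t • u) i * (t⁻¹ • v) i = (t * t⁻¹) * (u i * v i) := by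
        intro i; simp only [Pi.smul_apply, smul_eq_mul]; ring
      rw [Finset.sum_congr rfl fun i _ => h i, ← Finset.mul_sum, horth, mul_zero]
    have hBxy : (t • u) ⬝ᵥ M.mulVec (t⁻¹ • v) = u ⬝ᵥ M.mulVec v := by
      rw [Matrix.mulVec_smul, smul_dotProduct, dotProduct_smul, smul_eq_mul, smul_eq_mul,
        ← mul_assoc, mul_inv_cancel₀ (ne_of_gt htpos), one_mul]
    have hqx : ∑ i, (t • u) i ^ 2 = (t * t) * A := by
      simp only [Pi.smul_apply, smul_eq_mul, mul_pow, ← Finset.mul_sum, hA]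
      ring
    have hqy : ∑ i, (t⁻¹ • v) i ^ 2 = (t * t)⁻¹ * Bq := by
      simp only [Pi.smul_apply, smul_eq_mul, mul_pow, ← Finset.mul_sum, hBq]
      rw [show (t⁻¹ : ℝ) ^ 2 = (t * t)⁻¹ by rw [sq, mul_inv]]
    have hmain := hcore (t • u) (t⁻¹ • v) hortht
    rw [hBxy, hqx, hqy, htt] at hmain
    have hab1 : b / a * A = a * b := by
      rw [← haa]
      field_simp
    have hab2 : (b / a)⁻¹ * Bq = a * b := by
      rw [← hbb, inv_div]
      field_simp
    rw [hab1, hab2] at hmain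
    have hfin : K * (a * b + a * b) = K * a * b * 2 := by ring
    rw [hfin] at hmain
    linarith [hmain]
  refine ⟨hKey, ?_⟩
  intro u v hu hv
  have h := hKey ((α + β) / 2) u v hu hv
  have heq : max (β - (α + β) / 2) ((α + β) / 2 - α) = (β - α) / 2 := by
    rw [show β - (α + β) / 2 = (β - α) / 2 by ring, show (α + β) / 2 - α = (β - α) / 2 by ring,
      max_self]
  rwa [heq] at h
end
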